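/- Let X₁, X₂, … be independent identically distributed real random variables with the logistic distribution function G(x) = 1/(1+e^{−x}), and for each n let Y_{n,n} = max(X₁,…,X_n). Define M_{n,n} = n · ∫_{n/(n+1)}^{1} (Y_{n,n} − ln(t/(1−t)))² · 6t(1−t) dt. Then M_{n,n} → 0 in probability as n → ∞, i.e., for every ε > 0, P(|M_{n,n}| > ε) → 0. -/

import Mathlib

set_option maxHeartbeats 1000000

open MeasureTheory ProbabilityTheory Filter Real

/-- Auxiliary: `v * (log v)^2 ≤ 4` for `0 < v ≤ 1`. -/
lemma aux_v_mul_log_sq_le {v : ℝ} (hv : 0 < v) (hv1 : v ≤ 1) :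
    v * (Real.log v) ^ 2 ≤ 4 := by
  have hs : 0 < Real.sqrt v := Real.sqrt_pos.2 hv
  have hlog : Real.log v = 2 * Real.log (Real.sqrt v) := by
    rw [Real.log_sqrt hv.le]; ring
  have h1 : -Real.log (Real.sqrt v) ≤ (Real.sqrt v)⁻¹ := by
    have h := Real.log_le_sub_one_of_pos (show (0:ℝ) < (Real.sqrt v)⁻¹ by positivity)
    rw [Real.log_inv] at h
    have h0 : (0:ℝ) < (Real.sqrt v)⁻¹ := by positivity
    linarith
  have hlsn : Real.log (Real.sqrt v) ≤ 0 :=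
    Real.log_nonpos hs.le (Real.sqrt_le_one.2 hv1)
  have h2 : (Real.log (Real.sqrt v)) ^ 2 ≤ ((Real.sqrt v)⁻¹) ^ 2 := by
    nlinarith
  have h3 : ((Real.sqrt v)⁻¹) ^ 2 = v⁻¹ := by
    rw [inv_pow, Real.sq_sqrt hv.le]
  have h4 : (Real.log (Real.sqrt v)) ^ 2 ≤ v⁻¹ := by rw [← h3]; exact h2
  have h5 : v * (Real.log (Real.sqrt v)) ^ 2 ≤ 1 := by
    have := mul_le_mul_of_nonneg_left h4 hv.le
    rwa [mul_inv_cancel₀ (ne_of_gt hv)] at this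
  calc v * (Real.log v) ^ 2 = 4 * (v * (Real.log (Real.sqrt v)) ^ 2) := by
        rw [hlog]; ring
    _ ≤ 4 * 1 := by linarith
    _ = 4 := by norm_num

/-- Deterministic bound on the random integral. -/
lemma aux_M_bound (Y : ℝ) (n : ℕ) (hn : 1 ≤ n) :
    |(n : ℝ) * ∫ t in ((n : ℝ) / ((n : ℝ) + 1))..(1:ℝ),
        (Y - Real.log (t / (1 - t))) ^ 2 * (6 * t * (1 - t))| ≤
      18 * (Y - Real.log n) ^ 2 / ((n : ℝ) + 1) + 72 / (n : ℝ)
        + 18 * (Real.log 2) ^ 2 / ((n : ℝ) + 1) := by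
  have hn1 : (1:ℝ) ≤ (n:ℝ) := by exact_mod_cast hn
  have hnpos : (0:ℝ) < (n:ℝ) := by linarith
  have hn1pos : (0:ℝ) < (n:ℝ) + 1 := by linarith
  set a : ℝ := (n:ℝ) / ((n:ℝ) + 1) with ha
  have ha0 : 0 < a := div_pos hnpos hn1pos
  have ha1 : a < 1 := by
    rw [ha, div_lt_one hn1pos]; linarith
  have hoa : 1 - a = 1 / ((n:ℝ) + 1) := by
    rw [ha]; field_simp; ring
  set C : ℝ := 18 * (Y - Real.log n) ^ 2 / ((n : ℝ) + 1) + 72 / (n : ℝ)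
      + 18 * (Real.log 2) ^ 2 / ((n : ℝ) + 1) with hC
  have hCnn : 0 ≤ C := by rw [hC]; positivity
  have key : ∀ t ∈ Set.uIoc a (1:ℝ),
      ‖(Y - Real.log (t / (1 - t))) ^ 2 * (6 * t * (1 - t))‖ ≤ C := by
    intro t ht
    rw [Set.uIoc_of_le ha1.le] at ht
    obtain ⟨ht1, ht2⟩ := ht
    rcases eq_or_lt_of_le ht2 with heq | hlt
    · rw [heq]
      simpa using hCnn
    · set u : ℝ := 1 - t with hu
      -- goal : ‖(Y - Real.log (t / u)) ^ 2 * (6 * t * u)‖ ≤ C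
      have hu0 : 0 < u := by rw [hu]; linarith
      have ht0 : 0 < t := lt_trans ha0 ht1
      have hult : u < 1 / ((n:ℝ) + 1) := by
        have h' : u < 1 - a := by rw [hu]; linarith
        rwa [hoa] at h'
      have hu2 : u ≤ 1 / 2 := by
        have : (1:ℝ) / ((n:ℝ) + 1) ≤ 1 / 2 :=
          one_div_le_one_div_of_le (by norm_num) (by linarith)
        linarith
      have hQ : Real.log (t / u) = Real.log t - Real.log u :=
        Real.log_div (ne_of_gt ht0) (ne_of_gt hu0)
      set A : ℝ := Y - Real.log n with hA
      set B : ℝ := Real.log ((n:ℝ) * u) with hB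
      set L : ℝ := Real.log t with hL
      have hBsplit : B = Real.log n + Real.log u := by
        rw [hB]; exact Real.log_mul (ne_of_gt hnpos) (ne_of_gt hu0)
      have hE : Y - Real.log (t / u) = A + B - L := by
        rw [hQ, hA, hBsplit, hL]; ring
      rw [hE]
      have h6tu : (0:ℝ) ≤ 6 * t * u :=
        mul_nonneg (mul_nonneg (by norm_num) ht0.le) hu0.le
      have hnn : (0:ℝ) ≤ (A + B - L) ^ 2 * (6 * t * u) :=
        mul_nonneg (sq_nonneg _) h6tu
      rw [Real.norm_eq_abs, abs_of_nonneg hnn]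
      have hsq : (A + B - L) ^ 2 ≤ 3 * A ^ 2 + 3 * B ^ 2 + 3 * L ^ 2 := by
        nlinarith [sq_nonneg (A - B), sq_nonneg (A + L), sq_nonneg (B + L)]
      have h6 : 6 * t * u ≤ 6 * u := by nlinarith
      have step : (A + B - L) ^ 2 * (6 * t * u)
          ≤ 18 * u * A ^ 2 + 18 * u * B ^ 2 + 18 * u * L ^ 2 := by
        have hh1 : (A + B - L) ^ 2 * (6 * t * u) ≤ (A + B - L) ^ 2 * (6 * u) :=
          mul_le_mul_of_nonneg_left h6 (sq_nonneg _)
        have hh2 : (A + B - L) ^ 2 * (6 * u)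
            ≤ (3 * A ^ 2 + 3 * B ^ 2 + 3 * L ^ 2) * (6 * u) :=
          mul_le_mul_of_nonneg_right hsq (by positivity)
        have hh3 : (3 * A ^ 2 + 3 * B ^ 2 + 3 * L ^ 2) * (6 * u)
            = 18 * u * A ^ 2 + 18 * u * B ^ 2 + 18 * u * L ^ 2 := by ring
        linarith
      -- term 1
      have hb1 : 18 * u * A ^ 2 ≤ 18 * A ^ 2 / ((n:ℝ) + 1) := by
        have h' := mul_le_mul_of_nonneg_left hult.le
          (show (0:ℝ) ≤ 18 * A ^ 2 by positivity)
        calc 18 * u * A ^ 2 = 18 * A ^ 2 * u := by ring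
          _ ≤ 18 * A ^ 2 * (1 / ((n:ℝ) + 1)) := h'
          _ = 18 * A ^ 2 / ((n:ℝ) + 1) := by ring
      -- term 2
      have hb2 : 18 * u * B ^ 2 ≤ 72 / (n:ℝ) := by
        have hv0 : 0 < (n:ℝ) * u := by positivity
        have hv1 : (n:ℝ) * u ≤ 1 := by
          have h' := mul_lt_mul_of_pos_left hult hnpos
          have h'' : (n:ℝ) * (1 / ((n:ℝ) + 1)) = a := by rw [ha]; ring
          rw [h''] at h'
          linarith
        have h4 := aux_v_mul_log_sq_le hv0 hv1
        rw [hB]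
        have heq' : 18 * u * (Real.log ((n:ℝ) * u)) ^ 2
            = (18 / (n:ℝ)) * (((n:ℝ) * u) * (Real.log ((n:ℝ) * u)) ^ 2) := by
          field_simp
        rw [heq']
        have h5 := mul_le_mul_of_nonneg_left h4
          (show (0:ℝ) ≤ 18 / (n:ℝ) by positivity)
        calc (18 / (n:ℝ)) * (((n:ℝ) * u) * (Real.log ((n:ℝ) * u)) ^ 2)
            ≤ (18 / (n:ℝ)) * 4 := h5
          _ = 72 / (n:ℝ) := by ring
      -- term 3
      have hb3 : 18 * u * L ^ 2 ≤ 18 * (Real.log 2) ^ 2 / ((n:ℝ) + 1) := by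
        have hLle : L ≤ 0 := by
          rw [hL]; exact Real.log_nonpos ht0.le hlt.le
        have hLge : -Real.log 2 ≤ L := by
          have h12 : (1:ℝ) / 2 ≤ t := by
            rw [hu] at hu2; linarith
          have h' := Real.log_le_log (by norm_num : (0:ℝ) < 1 / 2) h12
          rw [show ((1:ℝ)/2) = 2⁻¹ by norm_num, Real.log_inv] at h'
          rw [hL]
          exact h'
        have hL2 : L ^ 2 ≤ (Real.log 2) ^ 2 := by
          have hl2 : (0:ℝ) ≤ Real.log 2 := Real.log_nonneg (by norm_num)
          nlinarith
        calc 18 * u * L ^ 2 ≤ 18 * u * (Real.log 2) ^ 2 :=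
              mul_le_mul_of_nonneg_left hL2 (by positivity)
          _ = 18 * (Real.log 2) ^ 2 * u := by ring
          _ ≤ 18 * (Real.log 2) ^ 2 * (1 / ((n:ℝ) + 1)) :=
              mul_le_mul_of_nonneg_left hult.le (by positivity)
          _ = 18 * (Real.log 2) ^ 2 / ((n:ℝ) + 1) := by ring
      clear_value a C u A B L
      rw [hC]
      linarith
  have hint := intervalIntegral.norm_integral_le_of_norm_le_const key
  rw [Real.norm_eq_abs] at hint
  have habs : |1 - a| = 1 / ((n:ℝ) + 1) := by
    rw [abs_of_nonneg (by linarith : (0:ℝ) ≤ 1 - a), hoa]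
  rw [habs] at hint
  have hiz0 : (0:ℝ) ≤ 1 / ((n:ℝ) + 1) := by positivity
  rw [abs_mul, abs_of_nonneg hnpos.le]
  have h1 : (n:ℝ) * |∫ t in a..(1:ℝ),
      (Y - Real.log (t / (1 - t))) ^ 2 * (6 * t * (1 - t))|
      ≤ (n:ℝ) * (C * (1 / ((n:ℝ) + 1))) :=
    mul_le_mul_of_nonneg_left hint hnpos.le
  have h2 : (n:ℝ) * (C * (1 / ((n:ℝ) + 1))) = C - C * (1 / ((n:ℝ) + 1)) := by
    field_simp
    ring
  have h3 : 0 ≤ C * (1 / ((n:ℝ) + 1)) := mul_nonneg hCnn hiz0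
  have h4 : (n:ℝ) * |∫ t in a..(1:ℝ),
      (Y - Real.log (t / (1 - t))) ^ 2 * (6 * t * (1 - t))| ≤ C := by
    rw [h2] at h1; linarith
  rw [hC] at h4
  exact h4

/-- Upper tail bound for the maximum. -/
lemma aux_upper_tail {Ω : Type*} [MeasurableSpace Ω] (P : Measure Ω)
    [IsProbabilityMeasure P] (X : ℕ → Ω → ℝ) (hmeas : ∀ i, Measurable (X i))
    (hdist : ∀ i, ∀ x : ℝ, (P {ω | X i ω ≤ x}).toReal = 1 / (1 + Real.exp (-x)))
    (n : ℕ) (hn : 1 ≤ n) (c : ℝ) :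
    (P {ω | Real.log n + c < ⨆ i : Fin n, X (i : ℕ) ω}).toReal ≤ Real.exp (-c) := by
  have : Nonempty (Fin n) := ⟨⟨0, hn⟩⟩
  have hn1 : (1:ℝ) ≤ (n:ℝ) := by exact_mod_cast hn
  have hnpos : (0:ℝ) < (n:ℝ) := by linarith
  set b : ℝ := Real.log n + c with hb
  have hsub : {ω | b < ⨆ i : Fin n, X (i : ℕ) ω}
      ⊆ ⋃ i : Fin n, {ω | b < X (i : ℕ) ω} := by
    intro ω hω
    by_contra h
    simp only [Set.mem_iUnion, Set.mem_setOf_eq, not_exists, not_lt] at h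
    have : (⨆ i : Fin n, X (i : ℕ) ω) ≤ b := ciSup_le h
    exact absurd hω (not_lt.2 this)
  have hmeasset : ∀ i : ℕ, MeasurableSet {ω | X i ω ≤ b} :=
    fun i => (hmeas i) measurableSet_Iic
  have heach : ∀ i : Fin n, (P {ω | b < X (i : ℕ) ω}).toReal
      = 1 - 1 / (1 + Real.exp (-b)) := by
    intro i
    have hcompl : {ω | b < X (i : ℕ) ω} = {ω | X (i : ℕ) ω ≤ b}ᶜ := by
      ext ω; simp [not_le]
    rw [hcompl, prob_compl_eq_one_sub (hmeasset i),
      ENNReal.toReal_sub_of_le prob_le_one ENNReal.one_ne_top,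
      ENNReal.toReal_one, hdist (i : ℕ) b]
  have hstep1 : (P {ω | b < ⨆ i : Fin n, X (i : ℕ) ω}).toReal
      ≤ ∑ i : Fin n, (P {ω | b < X (i : ℕ) ω}).toReal := by
    rw [← ENNReal.toReal_sum (fun i _ => measure_ne_top P _)]
    refine ENNReal.toReal_mono (ENNReal.sum_ne_top.2 fun i _ => measure_ne_top P _) ?_
    exact le_trans (measure_mono hsub) (measure_iUnion_fintype_le P _)
  have hsum : ∑ i : Fin n, (P {ω | b < X (i : ℕ) ω}).toReal
      = (n : ℝ) * (1 - 1 / (1 + Real.exp (-b))) := by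
    rw [Finset.sum_congr rfl (fun i _ => heach i)]
    simp [Finset.card_univ, mul_comm]
    ring
  have hx0 : 0 < Real.exp (-b) := Real.exp_pos _
  have htail : 1 - 1 / (1 + Real.exp (-b)) ≤ Real.exp (-b) := by
    have h1 : 1 - 1 / (1 + Real.exp (-b)) = Real.exp (-b) / (1 + Real.exp (-b)) := by
      field_simp
      ring
    rw [h1]
    exact div_le_self hx0.le (by linarith)
  have hexpb : Real.exp (-b) = (1 / (n:ℝ)) * Real.exp (-c) := by
    rw [hb, show -(Real.log n + c) = -Real.log n + -c by ring, Real.exp_add,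
      Real.exp_neg, Real.exp_log hnpos, one_div]
  calc (P {ω | b < ⨆ i : Fin n, X (i : ℕ) ω}).toReal
      ≤ ∑ i : Fin n, (P {ω | b < X (i : ℕ) ω}).toReal := hstep1
    _ = (n : ℝ) * (1 - 1 / (1 + Real.exp (-b))) := hsum
    _ ≤ (n : ℝ) * Real.exp (-b) := mul_le_mul_of_nonneg_left htail hnpos.le
    _ = Real.exp (-c) := by rw [hexpb]; field_simp

/-- Lower tail bound for the maximum. -/
lemma aux_lower_tail {Ω : Type*} [MeasurableSpace Ω] (P : Measure Ω)
    [IsProbabilityMeasure P] (X : ℕ → Ω → ℝ)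
    (hindep : iIndepFun X P)
    (hdist : ∀ i, ∀ x : ℝ, (P {ω | X i ω ≤ x}).toReal = 1 / (1 + Real.exp (-x)))
    (n : ℕ) (hn : 1 ≤ n) (c : ℝ) :
    (P {ω | (⨆ i : Fin n, X (i : ℕ) ω) < Real.log n - c}).toReal ≤ Real.exp (-c) := by
  have hne : Nonempty (Fin n) := ⟨⟨0, hn⟩⟩
  have hn1 : (1:ℝ) ≤ (n:ℝ) := by exact_mod_cast hn
  have hnpos : (0:ℝ) < (n:ℝ) := by linarith
  set b : ℝ := Real.log n - c with hb
  have hsub : {ω | (⨆ i : Fin n, X (i : ℕ) ω) < b}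
      ⊆ ⋂ i ∈ Finset.range n, {ω | X i ω ≤ b} := by
    intro ω hω
    simp only [Set.mem_iInter, Set.mem_setOf_eq]
    intro i hi
    rw [Finset.mem_range] at hi
    have hle : X i ω ≤ ⨆ j : Fin n, X (j : ℕ) ω := by
      have h' := le_ciSup (f := fun j : Fin n => X (j : ℕ) ω)
        (Set.Finite.bddAbove (Set.finite_range _)) ⟨i, hi⟩
      simpa using h'
    exact le_trans hle (le_of_lt hω)
  have hprod := hindep.meas_biInter (S := Finset.range n)
    (s := fun i => {ω | X i ω ≤ b})
    (fun i _ => ⟨Set.Iic b, measurableSet_Iic, rfl⟩)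
  have hstep1 : (P {ω | (⨆ i : Fin n, X (i : ℕ) ω) < b}).toReal
      ≤ (1 / (1 + Real.exp (-b))) ^ n := by
    have h1 : (P {ω | (⨆ i : Fin n, X (i : ℕ) ω) < b}).toReal
        ≤ (P (⋂ i ∈ Finset.range n, {ω | X i ω ≤ b})).toReal :=
      ENNReal.toReal_mono (measure_ne_top P _) (measure_mono hsub)
    have h2 : (P (⋂ i ∈ Finset.range n, {ω | X i ω ≤ b})).toReal
        = (1 / (1 + Real.exp (-b))) ^ n := by
      rw [hprod, ENNReal.toReal_prod,
        Finset.prod_congr rfl (fun i _ => hdist i b)]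
      simp
    rw [h2] at h1
    exact h1
  have hx : Real.exp (-b) = Real.exp c * ((n:ℝ))⁻¹ := by
    rw [hb, show -(Real.log n - c) = c + -Real.log n by ring, Real.exp_add,
      Real.exp_neg, Real.exp_log hnpos]
  have hxpos : (0:ℝ) < Real.exp (-b) := Real.exp_pos _
  have hbern : 1 + (n:ℝ) * Real.exp (-b) ≤ (1 + Real.exp (-b)) ^ n := by
    have h' := one_add_mul_le_pow (show (-2:ℝ) ≤ Real.exp (-b) by linarith) n
    linarith
  have hnx : (n:ℝ) * Real.exp (-b) = Real.exp c := by
    rw [hx]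
    field_simp
  have hfin : (1 / (1 + Real.exp (-b))) ^ n ≤ Real.exp (-c) := by
    rw [div_pow, one_pow]
    have h1 : 1 / (1 + Real.exp (-b)) ^ n ≤ 1 / (1 + Real.exp c) := by
      apply one_div_le_one_div_of_le
      · positivity
      · rw [← hnx]; exact hbern
    have h2 : 1 / (1 + Real.exp c) ≤ Real.exp (-c) := by
      have h3 : 1 / (1 + Real.exp c) ≤ 1 / Real.exp c :=
        one_div_le_one_div_of_le (Real.exp_pos c) (by linarith)
      rw [Real.exp_neg, ← one_div]
      exact h3
    linarith
  linarith [hstep1, hfin]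

/-- If `X₁, X₂, …` are i.i.d. with logistic distribution function `G(x) = 1/(1+e^{−x})`,
`Y_{n,n} = max(X₁,…,X_n)`, and
`M_{n,n} = n · ∫_{n/(n+1)}^{1} (Y_{n,n} − ln(t/(1−t)))² · 6t(1−t) dt`,
then `M_{n,n} → 0` in probability. -/
theorem logistic_max_tail_integral_to_zero_in_probability
    {Ω : Type*} [MeasurableSpace Ω] (P : Measure Ω) [IsProbabilityMeasure P]
    (X : ℕ → Ω → ℝ) (hmeas : ∀ i, Measurable (X i))
    (hindep : iIndepFun X P)
    (hdist : ∀ i, ∀ x : ℝ, (P {ω | X i ω ≤ x}).toReal = 1 / (1 + Real.exp (-x))) :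
    ∀ ε > (0:ℝ),
      Tendsto (fun n : ℕ =>
          (P {ω | ε <
              |(n : ℝ) * ∫ t in ((n : ℝ) / ((n : ℝ) + 1))..(1:ℝ),
                  ((⨆ i : Fin n, X i ω) - Real.log (t / (1 - t))) ^ 2 *
                    (6 * t * (1 - t))|}).toReal)
        atTop (nhds 0) := by
  intro ε hε
  set a : ℕ → ℝ := fun n => Real.sqrt (ε * n) / 6 with haa
  have ha0 : ∀ n, 0 ≤ a n := fun n => by rw [haa]; positivity
  have hg : Tendsto (fun n : ℕ => 2 * Real.exp (-(a n))) atTop (nhds 0) := by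
    have h1 : Tendsto (fun n : ℕ => ε * (n:ℝ)) atTop atTop :=
      Tendsto.const_mul_atTop hε tendsto_natCast_atTop_atTop
    have hsqrt : Tendsto Real.sqrt atTop atTop := by
      rw [tendsto_atTop_atTop]
      intro b
      refine ⟨b ^ 2, fun x hx => ?_⟩
      calc b ≤ |b| := le_abs_self b
        _ = Real.sqrt (b ^ 2) := (Real.sqrt_sq_eq_abs b).symm
        _ ≤ Real.sqrt x := Real.sqrt_le_sqrt hx
    have h2 : Tendsto (fun n : ℕ => a n) atTop atTop := by
      simp only [haa]
      exact Tendsto.atTop_div_const (by norm_num) (hsqrt.comp h1)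
    have h3 : Tendsto (fun n : ℕ => Real.exp (-(a n))) atTop (nhds 0) :=
      Real.tendsto_exp_atBot.comp (tendsto_neg_atTop_atBot.comp h2)
    have h4 := h3.const_mul (2:ℝ)
    simpa using h4
  apply squeeze_zero' (Eventually.of_forall fun n => ENNReal.toReal_nonneg) ?_ hg
  have hsmall : Tendsto
      (fun n : ℕ => 72 / (n:ℝ) + 18 * (Real.log 2) ^ 2 / ((n:ℝ) + 1))
      atTop (nhds 0) := by
    have h1 : Tendsto (fun n : ℕ => 72 / (n:ℝ)) atTop (nhds 0) :=
      tendsto_const_div_atTop_nhds_zero_nat 72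
    have h2 : Tendsto (fun n : ℕ => 18 * (Real.log 2) ^ 2 / ((n:ℝ) + 1))
        atTop (nhds 0) := by
      have h' := (tendsto_const_div_atTop_nhds_zero_nat
        (18 * (Real.log 2) ^ 2)).comp (tendsto_add_atTop_nat 1)
      simp only [Function.comp_def] at h'
      push_cast at h'
      exact h'
    simpa using h1.add h2
  have hev : ∀ᶠ n : ℕ in atTop,
      72 / (n:ℝ) + 18 * (Real.log 2) ^ 2 / ((n:ℝ) + 1) ≤ ε / 2 :=
    (hsmall.eventually_lt_const (by linarith : (0:ℝ) < ε / 2)).mono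
      fun n h => h.le
  filter_upwards [hev, eventually_ge_atTop 1] with n hsm hn
  have hn1 : (1:ℝ) ≤ (n:ℝ) := by exact_mod_cast hn
  have hsq : (a n) ^ 2 = ε * n / 36 := by
    rw [haa]
    simp only
    rw [div_pow, Real.sq_sqrt (by positivity)]
    norm_num
  have hsub : {ω | ε <
      |(n : ℝ) * ∫ t in ((n : ℝ) / ((n : ℝ) + 1))..(1:ℝ),
          ((⨆ i : Fin n, X i ω) - Real.log (t / (1 - t))) ^ 2 *
            (6 * t * (1 - t))|}
      ⊆ {ω | Real.log n + a n < ⨆ i : Fin n, X (i : ℕ) ω}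
        ∪ {ω | (⨆ i : Fin n, X (i : ℕ) ω) < Real.log n - a n} := by
    intro ω hω
    simp only [Set.mem_setOf_eq] at hω
    set Y : ℝ := ⨆ i : Fin n, X (i : ℕ) ω with hY
    have hb := aux_M_bound Y n hn
    have h1 : ε / 2 < 18 * (Y - Real.log n) ^ 2 / ((n:ℝ) + 1) := by
      linarith
    have hpos : (0:ℝ) < (n:ℝ) + 1 := by linarith
    have h1' : ε / 2 * ((n:ℝ) + 1) < 18 * (Y - Real.log n) ^ 2 :=
      (lt_div_iff₀ hpos).1 h1
    have h2 : ε * (n:ℝ) / 36 < (Y - Real.log n) ^ 2 := by linarith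
    have h3 : a n < |Y - Real.log n| := by
      nlinarith [sq_abs (Y - Real.log n), abs_nonneg (Y - Real.log n),
        ha0 n, hsq, h2]
    rcases lt_abs.1 h3 with h | h
    · left
      simp only [Set.mem_setOf_eq]
      linarith
    · right
      simp only [Set.mem_setOf_eq]
      linarith
  calc (P {ω | ε <
      |(n : ℝ) * ∫ t in ((n : ℝ) / ((n : ℝ) + 1))..(1:ℝ),
          ((⨆ i : Fin n, X i ω) - Real.log (t / (1 - t))) ^ 2 *
            (6 * t * (1 - t))|}).toReal
      ≤ (P ({ω | Real.log n + a n < ⨆ i : Fin n, X (i : ℕ) ω}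
        ∪ {ω | (⨆ i : Fin n, X (i : ℕ) ω) < Real.log n - a n})).toReal :=
        ENNReal.toReal_mono (measure_ne_top P _) (measure_mono hsub)
    _ ≤ (P {ω | Real.log n + a n < ⨆ i : Fin n, X (i : ℕ) ω}
        + P {ω | (⨆ i : Fin n, X (i : ℕ) ω) < Real.log n - a n}).toReal :=
        ENNReal.toReal_mono
          (ENNReal.add_ne_top.2 ⟨measure_ne_top P _, measure_ne_top P _⟩)
          (measure_union_le _ _)
    _ = (P {ω | Real.log n + a n < ⨆ i : Fin n, X (i : ℕ) ω}).toReal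
        + (P {ω | (⨆ i : Fin n, X (i : ℕ) ω) < Real.log n - a n}).toReal :=
        ENNReal.toReal_add (measure_ne_top P _) (measure_ne_top P _)
    _ ≤ Real.exp (-(a n)) + Real.exp (-(a n)) :=
        add_le_add (aux_upper_tail P X hmeas hdist n hn (a n))
          (aux_lower_tail P X hindep hdist n hn (a n))
    _ = 2 * Real.exp (-(a n)) := by ring
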